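/- In the continuous setting, for twice continuously differentiable log-densities, the expected single-coordinate Δ-AI objective satisfies E_{x∼p} E_i (log p(x + h e_i) − log p(x) − log q(x + h e_i) + log q(x))^2 = (h²/d)·E_{x∼p} ‖∇ log p(x) − ∇ log q(x)‖² + O(h³) as h → 0, where E_i is the uniform average over coordinates i ∈ {1,...,d}. -/

import Mathlib

set_option maxHeartbeats 1000000

open MeasureTheory Asymptotics

lemma taylor_aux {E : Type*} [NormedAddCommGroup E] [NormedSpace ℝ E]
    {f : E → ℝ} (hf : ContDiff ℝ 2 f) {M : ℝ}
    (hM : ∀ x, ‖iteratedFDeriv ℝ 2 f x‖ ≤ M) (x v : E) :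
    |f (x + v) - f x - fderiv ℝ f x v| ≤ M * ‖v‖ ^ 2 := by
  have hM0 : 0 ≤ M := le_trans (norm_nonneg _) (hM x)
  set g := fderiv ℝ f with hg
  have hfd : Differentiable ℝ f := hf.differentiable two_ne_zero
  have hgd : Differentiable ℝ g := (hf.fderiv_right (m := 1) (by norm_num)).differentiable one_ne_zero
  -- bound on second derivative as operator
  have hgb : ∀ y, ‖fderiv ℝ g y‖ ≤ M := by
    intro y
    refine ContinuousLinearMap.opNorm_le_bound _ hM0 (fun w => ?_)
    refine ContinuousLinearMap.opNorm_le_bound _ (by positivity) (fun z => ?_)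
    have : fderiv ℝ g y w z = iteratedFDeriv ℝ 2 f y ![w, z] := by
      rw [iteratedFDeriv_two_apply]; simp; rfl
    rw [this]
    calc ‖iteratedFDeriv ℝ 2 f y ![w, z]‖ ≤ ‖iteratedFDeriv ℝ 2 f y‖ * ∏ i, ‖(![w, z]) i‖ :=
          ContinuousMultilinearMap.le_opNorm _ _
      _ ≤ M * (‖w‖ * ‖z‖) := by
          rw [Fin.prod_univ_two]
          gcongr <;> simp [hM y]
      _ = M * ‖w‖ * ‖z‖ := by ring
  -- g is Lipschitz with constant M
  have hlip : ∀ y z : E, ‖g y - g z‖ ≤ M * ‖y - z‖ := by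
    intro y z
    exact Convex.norm_image_sub_le_of_norm_fderiv_le (fun a _ => hgd a) (fun a _ => hgb a)
      convex_univ (Set.mem_univ z) (Set.mem_univ y)
  -- apply MVT to φ y = f y - g x (y - x)
  set φ : E → ℝ := fun y => f y - g x (y - x) with hφ
  have hφd : ∀ y : E, HasFDerivAt φ (g y - g x) y := by
    intro y
    have h1 : HasFDerivAt f (g y) y := (hfd y).hasFDerivAt
    have h2 : HasFDerivAt (fun y : E => g x (y - x)) (g x) y := by
      have h3 : HasFDerivAt (fun y : E => y - x) (ContinuousLinearMap.id ℝ E) y :=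
        (hasFDerivAt_id y).sub_const x
      exact ((g x).hasFDerivAt.comp y h3 : _)
    have := h1.sub h2
    exact this
  have key : ‖φ (x + v) - φ x‖ ≤ (M * ‖v‖) * ‖(x + v) - x‖ := by
    refine (convex_closedBall x ‖v‖).norm_image_sub_le_of_norm_hasFDerivWithin_le
      (fun y _ => (hφd y).hasFDerivWithinAt) (fun y hy => ?_) ?_ ?_
    · calc ‖g y - g x‖ ≤ M * ‖y - x‖ := hlip y x
        _ ≤ M * ‖v‖ := by
            gcongr
            simpa [dist_eq_norm] using hy
    · simp [Metric.mem_closedBall]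
    · simp [Metric.mem_closedBall, dist_eq_norm]
  have : φ (x + v) - φ x = f (x + v) - f x - fderiv ℝ f x v := by
    simp only [hφ, hg]
    simp
    ring
  rw [this] at key
  calc |f (x + v) - f x - fderiv ℝ f x v| ≤ (M * ‖v‖) * ‖(x + v) - x‖ := key
    _ = M * ‖v‖ ^ 2 := by simp; ring

theorem stmt_12 {d : ℕ} (hd : 0 < d)
    (lp lq : (Fin d → ℝ) → ℝ)
    (hlp : ContDiff ℝ 2 lp) (hlq : ContDiff ℝ 2 lq)
    (Mp Mq : ℝ)
    (hMp : ∀ x, ‖iteratedFDeriv ℝ 2 lp x‖ ≤ Mp)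
    (hMq : ∀ x, ‖iteratedFDeriv ℝ 2 lq x‖ ≤ Mq)
    (μ : Measure (Fin d → ℝ))
    (hμ : μ = volume.withDensity (fun x => ENNReal.ofReal (Real.exp (lp x))))
    (hprob : IsProbabilityMeasure μ)
    (hint : ∀ h : ℝ, Integrable (fun x =>
      ∑ i, (lp (x + h • (Pi.single i 1 : Fin d → ℝ)) - lp x -
            (lq (x + h • (Pi.single i 1 : Fin d → ℝ)) - lq x)) ^ 2) μ)
    (hint2 : Integrable (fun x =>
      ∑ i, (fderiv ℝ lp x ((Pi.single i 1 : Fin d → ℝ)) - fderiv ℝ lq x ((Pi.single i 1 : Fin d → ℝ))) ^ 2) μ) :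
    (fun h : ℝ =>
      (∫ x, (1 / (d : ℝ)) *
          ∑ i, (lp (x + h • (Pi.single i 1 : Fin d → ℝ)) - lp x -
                (lq (x + h • (Pi.single i 1 : Fin d → ℝ)) - lq x)) ^ 2 ∂μ)
      - h ^ 2 / (d : ℝ) *
          ∫ x, ∑ i, (fderiv ℝ lp x ((Pi.single i 1 : Fin d → ℝ)) - fderiv ℝ lq x ((Pi.single i 1 : Fin d → ℝ))) ^ 2 ∂μ)
    =O[nhds 0] (fun h => |h| ^ 3) := by
  have hd' : (0:ℝ) < d := by exact_mod_cast hd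
  set f : (Fin d → ℝ) → ℝ := fun x => lp x - lq x with hfdef
  have hf : ContDiff ℝ 2 f := hlp.sub hlq
  set M : ℝ := Mp + Mq with hMdef
  have hM : ∀ x, ‖iteratedFDeriv ℝ 2 f x‖ ≤ M := by
    intro x
    have hfeq : f = fun y => lp y + (-lq) y := by
      funext y; simp [hfdef, sub_eq_add_neg]
    have heq : iteratedFDeriv ℝ 2 f x
        = iteratedFDeriv ℝ 2 lp x + iteratedFDeriv ℝ 2 (-lq) x := by
      rw [hfeq]
      exact iteratedFDeriv_add_apply (i := 2) (f := lp) (g := -lq) (x := x)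
        hlp.contDiffAt hlq.neg.contDiffAt
    rw [heq]
    refine (norm_add_le _ _).trans (add_le_add (hMp x) ?_)
    rw [iteratedFDeriv_neg_apply, norm_neg]
    exact hMq x
  have hM0 : 0 ≤ M := le_trans (norm_nonneg _) (hM 0)
  -- derivative relation
  have hdiffp : Differentiable ℝ lp := hlp.differentiable two_ne_zero
  have hdiffq : Differentiable ℝ lq := hlq.differentiable two_ne_zero
  have hder : ∀ (x : Fin d → ℝ) (i : Fin d),
      fderiv ℝ lp x (Pi.single i 1) - fderiv ℝ lq x (Pi.single i 1)
        = fderiv ℝ f x (Pi.single i 1) := by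
    intro x i
    rw [hfdef]
    rw [fderiv_fun_sub (hdiffp x) (hdiffq x)]
    simp
  -- single-coordinate norm
  have hnorm : ∀ (i : Fin d) (h : ℝ), ‖h • (Pi.single i 1 : Fin d → ℝ)‖ = |h| := by
    intro i h
    rw [norm_smul, Pi.norm_single]
    simp
  -- pointwise Taylor bound per coordinate
  have hpt : ∀ (h : ℝ) (x : Fin d → ℝ) (i : Fin d),
      |(lp (x + h • (Pi.single i 1 : Fin d → ℝ)) - lp x -
          (lq (x + h • (Pi.single i 1 : Fin d → ℝ)) - lq x)) ^ 2
        - h ^ 2 * (fderiv ℝ lp x (Pi.single i 1) - fderiv ℝ lq x (Pi.single i 1)) ^ 2|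
      ≤ M ^ 2 * h ^ 4 + M * |h| ^ 3 *
          (1 + (fderiv ℝ lp x (Pi.single i 1) - fderiv ℝ lq x (Pi.single i 1)) ^ 2) := by
    intro h x i
    set s : ℝ := fderiv ℝ lp x (Pi.single i 1) - fderiv ℝ lq x (Pi.single i 1) with hs
    set Δ : ℝ := lp (x + h • (Pi.single i 1 : Fin d → ℝ)) - lp x -
          (lq (x + h • (Pi.single i 1 : Fin d → ℝ)) - lq x) with hΔ
    have hΔf : Δ = f (x + h • (Pi.single i 1 : Fin d → ℝ)) - f x := by
      rw [hΔ, hfdef]; ring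
    have hT := taylor_aux hf hM x (h • (Pi.single i 1 : Fin d → ℝ))
    rw [hnorm i h, ContinuousLinearMap.map_smul] at hT
    have hR : |Δ - h * s| ≤ M * h ^ 2 := by
      rw [hΔf, hs, hder x i]
      simpa [smul_eq_mul, sq_abs] using hT
    -- algebra
    have habs : |Δ ^ 2 - h ^ 2 * s ^ 2| = |Δ - h * s| * |Δ + h * s| := by
      rw [← abs_mul]; ring_nf
    have h1 : |Δ + h * s| ≤ M * h ^ 2 + 2 * (|h| * |s|) := by
      have : |Δ + h * s| ≤ |Δ - h * s| + 2 * |h * s| := by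
        have : Δ + h * s = (Δ - h * s) + 2 * (h * s) := by ring
        rw [this]
        calc |(Δ - h * s) + 2 * (h * s)| ≤ |Δ - h * s| + |2 * (h * s)| := abs_add_le _ _
          _ = |Δ - h * s| + 2 * |h * s| := by rw [abs_mul]; norm_num
      rw [abs_mul] at this
      linarith [hR]
    have h2 : |Δ ^ 2 - h ^ 2 * s ^ 2| ≤ (M * h ^ 2) * (M * h ^ 2 + 2 * (|h| * |s|)) := by
      rw [habs]
      exact mul_le_mul hR h1 (abs_nonneg _) (by positivity)
    have h3 : |h| ^ 3 = h ^ 2 * |h| := by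
      rw [pow_succ, sq_abs]
    have h4 : 2 * |s| ≤ 1 + s ^ 2 := by nlinarith [sq_nonneg (|s| - 1), sq_abs s]
    calc |Δ ^ 2 - h ^ 2 * s ^ 2| ≤ (M * h ^ 2) * (M * h ^ 2 + 2 * (|h| * |s|)) := h2
      _ = M ^ 2 * h ^ 4 + M * (h ^ 2 * |h|) * (2 * |s|) := by ring
      _ ≤ M ^ 2 * h ^ 4 + M * (h ^ 2 * |h|) * (1 + s ^ 2) := by
          have : (0:ℝ) ≤ M * (h ^ 2 * |h|) := by positivity
          nlinarith [this]
      _ = M ^ 2 * h ^ 4 + M * |h| ^ 3 * (1 + s ^ 2) := by rw [h3]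
  -- name the integrals
  set S : (Fin d → ℝ) → ℝ := fun x =>
      ∑ i, (fderiv ℝ lp x ((Pi.single i 1 : Fin d → ℝ)) - fderiv ℝ lq x ((Pi.single i 1 : Fin d → ℝ))) ^ 2
    with hSdef
  set I₂ : ℝ := ∫ x, S x ∂μ with hI2
  have hI2nn : 0 ≤ I₂ := integral_nonneg (fun x => Finset.sum_nonneg fun i _ => sq_nonneg _)
  set C : ℝ := M ^ 2 + M + M * I₂ with hC
  rw [isBigO_iff]
  refine ⟨C, ?_⟩
  have hev : ∀ᶠ h : ℝ in nhds 0, |h| ≤ 1 := by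
    have := Metric.ball_mem_nhds (0:ℝ) one_pos
    filter_upwards [this] with h hh
    simp only [Metric.mem_ball, Real.dist_eq, sub_zero] at hh
    linarith
  filter_upwards [hev] with h hh
  set Dh : (Fin d → ℝ) → ℝ := fun x =>
      ∑ i, (lp (x + h • (Pi.single i 1 : Fin d → ℝ)) - lp x -
            (lq (x + h • (Pi.single i 1 : Fin d → ℝ)) - lq x)) ^ 2 with hDh
  -- rewrite the LHS
  have hintD : Integrable Dh μ := hint h
  have hintS : Integrable S μ := hint2
  have hmain : (∫ x, (1 / (d : ℝ)) * Dh x ∂μ) - h ^ 2 / (d : ℝ) * I₂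
      = (1 / (d : ℝ)) * ∫ x, (Dh x - h ^ 2 * S x) ∂μ := by
    rw [integral_sub hintD (hintS.const_mul (h ^ 2)), integral_const_mul,
      integral_const_mul]
    field_simp
    rw [hI2]
  -- bound the inner integral
  set G : (Fin d → ℝ) → ℝ := fun x =>
      (d : ℝ) * (M ^ 2 * h ^ 4 + M * |h| ^ 3) + M * |h| ^ 3 * S x with hG
  have hintG : Integrable G μ := by
    exact (integrable_const _).add (hintS.const_mul _)
  have hbound : ∀ x, ‖Dh x - h ^ 2 * S x‖ ≤ G x := by
    intro x
    have : Dh x - h ^ 2 * S x = ∑ i,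
        ((lp (x + h • (Pi.single i 1 : Fin d → ℝ)) - lp x -
            (lq (x + h • (Pi.single i 1 : Fin d → ℝ)) - lq x)) ^ 2
          - h ^ 2 * (fderiv ℝ lp x (Pi.single i 1) - fderiv ℝ lq x (Pi.single i 1)) ^ 2) := by
      rw [hDh, hSdef, Finset.mul_sum, Finset.sum_sub_distrib]
    rw [this, Real.norm_eq_abs]
    calc |∑ i, _| ≤ ∑ i, |(lp (x + h • (Pi.single i 1 : Fin d → ℝ)) - lp x -
            (lq (x + h • (Pi.single i 1 : Fin d → ℝ)) - lq x)) ^ 2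
          - h ^ 2 * (fderiv ℝ lp x (Pi.single i 1) - fderiv ℝ lq x (Pi.single i 1)) ^ 2| :=
        Finset.abs_sum_le_sum_abs _ _
      _ ≤ ∑ i, (M ^ 2 * h ^ 4 + M * |h| ^ 3 *
          (1 + (fderiv ℝ lp x (Pi.single i 1) - fderiv ℝ lq x (Pi.single i 1)) ^ 2)) :=
        Finset.sum_le_sum (fun i _ => hpt h x i)
      _ = G x := by
        simp only [hG, hSdef, mul_add, mul_one]
        rw [Finset.sum_add_distrib, Finset.sum_add_distrib, Finset.sum_const, Finset.sum_const,
          ← Finset.mul_sum]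
        simp only [Finset.card_univ, Fintype.card_fin, nsmul_eq_mul]
        ring
  have hIG : ∫ x, G x ∂μ = (d : ℝ) * (M ^ 2 * h ^ 4 + M * |h| ^ 3) + M * |h| ^ 3 * I₂ := by
    rw [hG, integral_add (integrable_const _) (hintS.const_mul _), integral_const,
      integral_const_mul]
    simp [hI2]
  have hkey : ‖∫ x, (Dh x - h ^ 2 * S x) ∂μ‖ ≤ ∫ x, G x ∂μ :=
    norm_integral_le_of_norm_le hintG (Filter.Eventually.of_forall hbound)
  rw [hmain]
  have h4le : h ^ 4 ≤ |h| ^ 3 := by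
    have : h ^ 4 = |h| ^ 4 := by rw [← abs_pow, abs_of_nonneg (by positivity)]
    rw [this, pow_succ]
    nlinarith [abs_nonneg h, pow_nonneg (abs_nonneg h) 3]
  have habs3 : (0:ℝ) ≤ |h| ^ 3 := by positivity
  calc ‖(1 / (d : ℝ)) * ∫ x, (Dh x - h ^ 2 * S x) ∂μ‖
      = (1 / (d : ℝ)) * ‖∫ x, (Dh x - h ^ 2 * S x) ∂μ‖ := by
        rw [norm_mul, Real.norm_eq_abs, Real.norm_eq_abs, abs_of_nonneg (by positivity)]
    _ ≤ (1 / (d : ℝ)) * ((d : ℝ) * (M ^ 2 * h ^ 4 + M * |h| ^ 3) + M * |h| ^ 3 * I₂) := by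
        rw [← hIG]
        exact mul_le_mul_of_nonneg_left hkey (by positivity)
    _ = M ^ 2 * h ^ 4 + M * |h| ^ 3 + (1 / (d : ℝ)) * (M * |h| ^ 3 * I₂) := by
        field_simp
    _ ≤ C * ‖|h| ^ 3‖ := by
        rw [Real.norm_eq_abs, abs_of_nonneg habs3, hC]
        have hd1 : (1 / (d : ℝ)) ≤ 1 := by
          rw [div_le_one hd']
          exact_mod_cast hd
        have e1 : M ^ 2 * h ^ 4 ≤ M ^ 2 * |h| ^ 3 :=
          mul_le_mul_of_nonneg_left h4le (by positivity)
        have e2 : (1 / (d : ℝ)) * (M * |h| ^ 3 * I₂) ≤ M * I₂ * |h| ^ 3 := by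
          have e3 : (1 / (d : ℝ)) * (M * |h| ^ 3 * I₂) ≤ 1 * (M * |h| ^ 3 * I₂) :=
            mul_le_mul_of_nonneg_right hd1 (by positivity)
          nlinarith [e3]
        have e4 : (M ^ 2 + M + M * I₂) * |h| ^ 3
            = M ^ 2 * |h| ^ 3 + M * |h| ^ 3 + M * I₂ * |h| ^ 3 := by ring
        rw [e4]
        exact add_le_add (add_le_add e1 le_rfl) e2
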